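/- Let S ⊆ ℝⁿ. If there exists an infinite sequence of points x¹, x², x³, … in S that are pairwise distinct and such that for every pair of distinct indices j₁ ≠ j₂ the midpoint (x^{j₁} + x^{j₂})/2 does not belong to S, then S is not MICP-representable. -/
import Mathlib


/-- A set `S ⊆ E` (think `E = ℝⁿ`) is mixed-integer convex programming representable
(MICP-R) if there exist nonnegative integers `p`, `d` and a closed convex set
`M ⊆ E × ℝᵖ × ℝᵈ` such that `x ∈ S` iff there are `y ∈ ℝᵖ` and `z ∈ ℝᵈ` with all
coordinates of `z` integral and `(x, y, z) ∈ M`. -/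
def IsMICPR {E : Type*} [AddCommGroup E] [Module ℝ E] [TopologicalSpace E]
    (S : Set E) : Prop :=
  ∃ (p d : ℕ) (M : Set (E × (Fin p → ℝ) × (Fin d → ℝ))),
    IsClosed M ∧ Convex ℝ M ∧
      ∀ x : E, x ∈ S ↔ ∃ (y : Fin p → ℝ) (z : Fin d → ℝ),
        (∀ i, ∃ k : ℤ, z i = (k : ℝ)) ∧ (x, y, z) ∈ M

/-- If `S ⊆ ℝⁿ` contains an infinite sequence of pairwise distinct points such that
the midpoint of any two distinct points of the sequence lies outside `S`, then `S`
is not MICP-representable. -/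
theorem not_micpr_of_midpoints {n : ℕ} (S : Set (Fin n → ℝ)) (x : ℕ → (Fin n → ℝ))
    (hinj : Function.Injective x) (hmem : ∀ j, x j ∈ S)
    (hmid : ∀ j₁ j₂ : ℕ, j₁ ≠ j₂ → (2⁻¹ : ℝ) • (x j₁ + x j₂) ∉ S) :
    ¬ IsMICPR S := by
  rintro ⟨p, d, M, -, hconv, hM⟩
  -- choose integer witnesses
  have hch : ∀ j : ℕ, ∃ (y : Fin p → ℝ) (k : Fin d → ℤ),
      (x j, y, fun i => ((k i : ℝ))) ∈ M := by
    intro j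
    obtain ⟨y, z, hz, hmem'⟩ := (hM (x j)).1 (hmem j)
    choose k hk using hz
    refine ⟨y, k, ?_⟩
    have : (fun i => ((k i : ℝ))) = z := by funext i; exact (hk i).symm
    rw [this]; exact hmem'
  choose y k hk using hch
  -- pigeonhole on parity
  have : ∃ j₁ j₂ : ℕ, j₁ ≠ j₂ ∧
      (fun i => ((k j₁ i : ZMod 2))) = (fun i => ((k j₂ i : ZMod 2))) := by
    obtain ⟨j₁, j₂, hne, heq⟩ :=
      Finite.exists_ne_map_eq_of_infinite (fun j : ℕ => fun i => ((k j i : ZMod 2)))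
    exact ⟨j₁, j₂, hne, heq⟩
  obtain ⟨j₁, j₂, hne, hpar⟩ := this
  -- midpoint lies in M
  have hmidM : ((2⁻¹ : ℝ) • ((x j₁, y j₁, fun i => ((k j₁ i : ℝ))) +
      (x j₂, y j₂, fun i => ((k j₂ i : ℝ)))) :
        (Fin n → ℝ) × (Fin p → ℝ) × (Fin d → ℝ)) ∈ M := by
    have := hconv (hk j₁) (hk j₂) (by norm_num : (0:ℝ) ≤ 2⁻¹)
      (by norm_num : (0:ℝ) ≤ 2⁻¹) (by norm_num)
    simpa [smul_add] using this
  apply hmid j₁ j₂ hne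
  refine (hM _).2 ⟨(2⁻¹ : ℝ) • (y j₁ + y j₂),
    (2⁻¹ : ℝ) • ((fun i => ((k j₁ i : ℝ))) + fun i => ((k j₂ i : ℝ))), ?_, ?_⟩
  · intro i
    have hp : (k j₁ i : ZMod 2) = (k j₂ i : ZMod 2) := congrFun hpar i
    have hdvd : (2 : ℤ) ∣ (k j₂ i - k j₁ i) :=
      ((ZMod.intCast_eq_intCast_iff (k j₁ i) (k j₂ i) 2).mp hp).dvd
    obtain ⟨m, hm⟩ := hdvd
    refine ⟨k j₂ i - m, ?_⟩
    have hsum : k j₁ i + k j₂ i = 2 * (k j₂ i - m) := by linarith [hm]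
    have : ((k j₁ i : ℝ) + k j₂ i) = 2 * ((k j₂ i : ℝ) - m) := by
      exact_mod_cast congrArg (fun t : ℤ => (t : ℝ)) hsum
    simp only [Pi.smul_apply, Pi.add_apply, smul_eq_mul]
    push_cast [this]
    ring
  · simpa [Prod.smul_mk, Prod.mk_add_mk, smul_add] using hmidM
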